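/- Let p ∈ ℂ with p ∉ (−∞, 0] (so p ≠ 0 and Complex.log is holomorphic in a neighborhood of p). Then there exists ε₀ > 0 such that for all ε with 0 < ε < ε₀: (1/(2πI)) · ∮_{C(p,ε)} ((1 − z²)/(4z²)) · (Complex.log z − Complex.log p)⁻² dz = −(1 + p²)/(4p). Equivalently, the residue of ((1−z²)/(4z²))·(log z − log p)⁻² at z = p equals −(1+p²)/(4p). -/

import Mathlib

noncomputable section

open Complex Metric

/-- The residue of `((1−z²)/(4z²))·(log z − log p)⁻²` at `z = p` equals
`−(1+p²)/(4p)`: for all sufficiently small `ε > 0`,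
`(1/(2πI)) ∮_{C(p,ε)} ((1−z²)/(4z²))·(log z − log p)⁻² dz = −(1+p²)/(4p)`. -/
theorem residue_log_sub_log_sq (p : ℂ) (hp : p ∈ Complex.slitPlane) :
    ∃ ε₀ : ℝ, 0 < ε₀ ∧ ∀ ε : ℝ, 0 < ε → ε < ε₀ →
      (1 / (2 * Real.pi * Complex.I)) *
        (∮ z in C(p, ε),
          ((1 - z ^ 2) / (4 * z ^ 2)) * ((Complex.log z - Complex.log p) ^ 2)⁻¹) =
        -(1 + p ^ 2) / (4 * p) := by
  obtain ⟨ε₀, hε₀, hball⟩ := Metric.isOpen_iff.mp Complex.isOpen_slitPlane p hp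
  have hp0 : p ≠ 0 := Complex.slitPlane_ne_zero hp
  refine ⟨ε₀, hε₀, fun ε hε hεε₀ => ?_⟩
  set f : ℂ → ℂ := fun z =>
    ((1 - z ^ 2) / (4 * z ^ 2)) * ((Complex.log z - Complex.log p) ^ 2)⁻¹ with hf_def
  set u : ℂ → ℂ := dslope Complex.log p with hu_def
  set N : ℂ → ℂ := fun z => -(1 + z ^ 2) / (4 * z ^ 2) * (u z)⁻¹ with hN_def
  set g : ℂ → ℂ := fun z => N z * (z - p)⁻¹ with hg_def
  set F : ℂ → ℂ := fun z =>
    -((1 - z ^ 2) / (4 * z)) * (Complex.log z - Complex.log p)⁻¹ with hF_def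
  have hslit : ∀ z ∈ ball p ε₀, z ∈ Complex.slitPlane := fun z hz => hball hz
  have hz0 : ∀ z ∈ ball p ε₀, z ≠ 0 := fun z hz => Complex.slitPlane_ne_zero (hslit z hz)
  have hL : ∀ z ∈ ball p ε₀, z ≠ p → Complex.log z - Complex.log p ≠ 0 := by
    intro z hz hzp h
    apply hzp
    have : Complex.exp (Complex.log z) = Complex.exp (Complex.log p) := by
      rw [sub_eq_zero] at h; rw [h]
    rwa [Complex.exp_log (hz0 z hz), Complex.exp_log hp0] at this
  have hup : u p = p⁻¹ := by
    rw [hu_def, dslope_same, (Complex.hasDerivAt_log hp).deriv]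
  have hu0 : ∀ z ∈ ball p ε₀, u z ≠ 0 := by
    intro z hz
    rcases eq_or_ne z p with rfl | hzp
    · rw [hup]; exact inv_ne_zero hp0
    · rw [hu_def, dslope_of_ne _ hzp, slope_def_field]
      exact div_ne_zero (hL z hz hzp) (sub_ne_zero.2 hzp)
  have hud : DifferentiableOn ℂ u (ball p ε₀) :=
    (Complex.differentiableOn_dslope (isOpen_ball.mem_nhds (mem_ball_self hε₀))).mpr
      (fun z hz => (Complex.differentiableAt_log (hslit z hz)).differentiableWithinAt)
  have hNd : DifferentiableOn ℂ N (ball p ε₀) := by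
    apply DifferentiableOn.mul
    · apply DifferentiableOn.div
      · exact ((differentiable_const (1:ℂ)).add (differentiable_id.pow 2)).neg.differentiableOn
      · exact ((differentiable_id.pow 2).const_mul 4).differentiableOn
      · intro z hz
        exact mul_ne_zero (by norm_num) (pow_ne_zero 2 (hz0 z hz))
    · exact hud.inv (fun z hz => hu0 z hz)
  have hsub : closedBall p ε ⊆ ball p ε₀ := closedBall_subset_ball hεε₀
  have hsphere : sphere p ε ⊆ ball p ε₀ := sphere_subset_closedBall.trans hsub
  have hN : DiffContOnCl ℂ N (ball p ε) :=
    ⟨hNd.mono (ball_subset_ball hεε₀.le),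
     hNd.continuousOn.mono (closure_ball_subset_closedBall.trans hsub)⟩
  have hCauchy : (∮ z in C(p, ε), (z - p)⁻¹ • N z) = (2 * Real.pi * Complex.I : ℂ) • N p :=
    hN.circleIntegral_sub_inv_smul (mem_ball_self hε)
  have hderiv : ∀ z ∈ sphere p ε, HasDerivAt F (f z - g z) z := by
    intro z hz
    have hzb : z ∈ ball p ε₀ := hsphere hz
    have hzs : z ∈ Complex.slitPlane := hslit z hzb
    have hz0' : z ≠ 0 := hz0 z hzb
    have hzp : z ≠ p := by
      intro h; rw [mem_sphere, h, dist_self] at hz; exact hε.ne hz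
    have hLz : Complex.log z - Complex.log p ≠ 0 := hL z hzb hzp
    have h1 : HasDerivAt (fun w => Complex.log w - Complex.log p) z⁻¹ z :=
      (Complex.hasDerivAt_log hzs).sub_const _
    have h2 : HasDerivAt (fun w => (Complex.log w - Complex.log p)⁻¹)
        (-(z⁻¹) / (Complex.log z - Complex.log p) ^ 2) z := h1.inv hLz
    have ha : HasDerivAt (fun w : ℂ => 1 - w ^ 2) (-(2 * z ^ 1)) z :=
      (hasDerivAt_pow 2 z).const_sub 1
    have hb : HasDerivAt (fun w : ℂ => 4 * w) 4 z := by
      simpa using (hasDerivAt_id z).const_mul (4 : ℂ)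
    have hab : HasDerivAt (fun w : ℂ => (1 - w ^ 2) / (4 * w))
        ((-(2 * z ^ 1) * (4 * z) - (1 - z ^ 2) * 4) / (4 * z) ^ 2) z :=
      ha.div hb (mul_ne_zero (by norm_num) hz0')
    have h3 := hab.neg.mul h2
    have hgz : g z = -(1 + z ^ 2) / (4 * z ^ 2) * (Complex.log z - Complex.log p)⁻¹ := by
      simp only [hg_def, hN_def, hu_def, dslope_of_ne _ hzp, slope_def_field, inv_div]
      field_simp [sub_ne_zero.2 hzp, hz0', hLz]
    refine HasDerivAt.congr_deriv h3 ?_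
    rw [hgz, hf_def]
    simp only [Pi.neg_apply]
    field_simp [hz0', hLz]
    ring
  have hzp' : ∀ z ∈ sphere p ε, z ≠ p := by
    intro z hz h; rw [mem_sphere, h, dist_self] at hz; exact hε.ne hz
  have hcf : ContinuousOn f (sphere p ε) := by
    intro z hz
    have hzb : z ∈ ball p ε₀ := hsphere hz
    have hLz : Complex.log z - Complex.log p ≠ 0 := hL z hzb (hzp' z hz)
    apply ContinuousAt.continuousWithinAt
    exact ((continuous_const.sub (continuous_pow 2)).continuousAt.div
        (continuous_const.mul (continuous_pow 2)).continuousAt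
        (mul_ne_zero (by norm_num) (pow_ne_zero 2 (hz0 z hzb)))).mul
      ((((continuousAt_clog (hslit z hzb)).sub continuousAt_const).pow 2).inv₀
        (pow_ne_zero 2 hLz))
  have hcg : ContinuousOn g (sphere p ε) :=
    (hNd.continuousOn.mono hsphere).mul
      ((continuousOn_id.sub continuousOn_const).inv₀
        (fun z hz => sub_ne_zero.2 (hzp' z hz)))
  have hfi : CircleIntegrable f p ε := hcf.circleIntegrable hε.le
  have hgi : CircleIntegrable g p ε := hcg.circleIntegrable hε.le
  have hzero : (∮ z in C(p, ε), (f z - g z)) = 0 :=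
    circleIntegral.integral_eq_zero_of_hasDerivWithinAt hε.le
      (fun z hz => (hderiv z hz).hasDerivWithinAt)
  have hsplit : (∮ z in C(p, ε), f z) = ∮ z in C(p, ε), g z :=
    sub_eq_zero.mp ((circleIntegral.integral_sub hfi hgi).symm.trans hzero)
  have hgs : (∮ z in C(p, ε), g z) = ∮ z in C(p, ε), (z - p)⁻¹ • N z := by
    refine circleIntegral.integral_congr hε.le fun z hz => ?_
    simp [hg_def, smul_eq_mul, mul_comm]
  have hNp : N p = -(1 + p ^ 2) / (4 * p) := by
    simp only [hN_def, hup, inv_inv]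
    field_simp
  rw [hsplit, hgs, hCauchy, smul_eq_mul, hNp]
  have h2pi : (2 * (Real.pi : ℂ) * Complex.I) ≠ 0 := by
    simp [Real.pi_ne_zero, Complex.I_ne_zero]
  field_simp
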